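/- For nonnegative integers h, a, b, the product of Gaussian binomial coefficients satisfies [h choose a]_q [h choose b]_q = ∑_{k=0}^{b} [h choose a+k]_q [a+k choose b]_q [b choose k]_q q^{k(a-b+k)}, as an identity in ℤ[q, q^{-1}]. -/

import Mathlib

open Polynomial Finset

/-- The q-integer `[n]_q = 1 + q + ⋯ + q^{n-1}` as a polynomial in `ℤ[q]`. -/
noncomputable def qint (n : ℕ) : Polynomial ℤ := ∑ i ∈ Finset.range n, X ^ i

/-- The q-factorial `[n]_q! = [n]_q [n-1]_q ⋯ [1]_q`. -/
noncomputable def qfact : ℕ → Polynomial ℤ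
  | 0 => 1
  | n + 1 => qint (n + 1) * qfact n

/-- The Gaussian (q-)binomial coefficient `[n choose k]_q` as a polynomial in `ℤ[q]`,
defined by the q-Pascal recurrence; it equals `∏_{i=1}^k (1-q^{n-i+1})/(1-q^i)` for
`0 ≤ k ≤ n` and `0` otherwise. -/
noncomputable def qbinom : ℕ → ℕ → Polynomial ℤ
  | _, 0 => 1
  | 0, _ + 1 => 0
  | n + 1, k + 1 => qbinom n k + X ^ (k + 1) * qbinom n (k + 1)

lemma qbinom_zero (n : ℕ) : qbinom n 0 = 1 := by cases n <;> rfl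

lemma qbinom_succ_succ (n k : ℕ) :
    qbinom (n+1) (k+1) = qbinom n k + X ^ (k + 1) * qbinom n (k + 1) := rfl

lemma qint_add (a b : ℕ) : qint (a + b) = qint a + X ^ a * qint b := by
  simp only [qint, Finset.sum_range_add, Finset.mul_sum, pow_add]

lemma qint_eval_one (n : ℕ) : (qint n).eval 1 = n := by
  simp [qint]

lemma qfact_eval_one (n : ℕ) : (qfact n).eval 1 = n.factorial := by
  induction n with
  | zero => simp [qfact]
  | succ n ih => rw [qfact]; simp [qint_eval_one, ih, Nat.factorial_succ]

lemma qfact_ne_zero (n : ℕ) : qfact n ≠ 0 := by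
  intro hz
  have := congrArg (Polynomial.eval (1:ℤ)) hz
  rw [qfact_eval_one] at this
  simp at this
  exact Nat.factorial_ne_zero n (by exact_mod_cast this)

lemma qbinom_eq_zero {n k : ℕ} (h : n < k) : qbinom n k = 0 := by
  induction n generalizing k with
  | zero => cases k with
    | zero => omega
    | succ j => rfl
  | succ n ih =>
    cases k with
    | zero => omega
    | succ j =>
      rw [qbinom_succ_succ, ih (by omega), ih (by omega)]
      ring

lemma qbinom_self (n : ℕ) : qbinom n n = 1 := by
  induction n with
  | zero => rfl
  | succ n ih => rw [qbinom_succ_succ, ih, qbinom_eq_zero (by omega)]; ring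

lemma qbinom_mul_qfact : ∀ n k : ℕ, k ≤ n →
    qbinom n k * qfact k * qfact (n - k) = qfact n := by
  intro n
  induction n with
  | zero => intro k hk; interval_cases k; simp [qbinom_zero, qfact]
  | succ n ih =>
    intro k hk
    cases k with
    | zero => simp [qbinom_zero, qfact]
    | succ k =>
      rw [qbinom_succ_succ]
      rcases Nat.lt_or_ge k n with hkn | hkn
      · -- k + 1 ≤ n
        have h1 : n + 1 - (k+1) = (n - (k+1)) + 1 := by omega
        have h2 : qfact (k+1) = qint (k+1) * qfact k := rfl
        have h3 : qfact (n - k) = qint (n - k) * qfact (n - (k+1)) := by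
          have : n - k = (n - (k+1)) + 1 := by omega
          rw [this]; rfl
        have e1 := ih k (by omega)
        have e2 := ih (k+1) (by omega)
        have key : qint (k+1) + X ^ (k+1) * qint (n - k) = qint (n+1) := by
          have : (k+1) + (n-k) = n + 1 := by omega
          rw [← this]; exact (qint_add (k+1) (n-k)).symm
        calc (qbinom n k + X ^ (k + 1) * qbinom n (k + 1)) * qfact (k+1) * qfact (n + 1 - (k+1))
            = qbinom n k * qfact k * qfact (n - k) * qint (k+1)
              + X ^ (k+1) * (qbinom n (k+1) * qfact (k+1) * qfact (n - (k+1))) * qint (n - k) := by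
              rw [h1]
              have h4 : n - (k+1) + 1 = n - k := by omega
              rw [show qfact (n - (k+1) + 1) = qint (n - (k+1) + 1) * qfact (n - (k+1)) from rfl, h4]
              rw [h2, h3]; ring
          _ = qfact n * (qint (k+1) + X ^ (k+1) * qint (n - k)) := by rw [e1, e2]; ring
          _ = qfact (n+1) := by
              rw [key, show qfact (n+1) = qint (n+1) * qfact n from rfl]; ring
      · -- k = n
        have hk' : k = n := by omega
        subst hk'
        rw [qbinom_self, qbinom_eq_zero (Nat.lt_succ_self k)]
        simp [qfact]

lemma qbinom_symm {n k : ℕ} (hk : k ≤ n) : qbinom n k = qbinom n (n - k) := by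
  have e1 := qbinom_mul_qfact n k hk
  have e2 := qbinom_mul_qfact n (n-k) (by omega)
  rw [show n - (n - k) = k by omega] at e2
  have : qbinom n k * (qfact k * qfact (n-k)) = qbinom n (n-k) * (qfact k * qfact (n-k)) := by
    rw [show qbinom n k * (qfact k * qfact (n-k)) = qbinom n k * qfact k * qfact (n-k) by ring, e1]
    rw [show qbinom n (n-k) * (qfact k * qfact (n-k)) = qbinom n (n-k) * qfact (n-k) * qfact k by ring, e2]
  exact mul_right_cancel₀ (mul_ne_zero (qfact_ne_zero k) (qfact_ne_zero (n-k))) this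

lemma qbinom_trinom (n a k : ℕ) :
    qbinom n (a + k) * qbinom (a + k) a = qbinom n a * qbinom (n - a) k := by
  rcases Nat.lt_or_ge n a with h | h
  · rw [qbinom_eq_zero (show n < a + k by omega), qbinom_eq_zero h]; ring
  rcases Nat.lt_or_ge n (a + k) with h2 | h2
  · rw [qbinom_eq_zero h2, qbinom_eq_zero (show n - a < k by omega)]; ring
  -- a + k ≤ n
  have hne : qfact a * qfact k * qfact (n - a - k) ≠ 0 :=
    mul_ne_zero (mul_ne_zero (qfact_ne_zero _) (qfact_ne_zero _)) (qfact_ne_zero _)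
  apply mul_right_cancel₀ hne
  have eA := qbinom_mul_qfact (a+k) a (by omega)
  rw [show a + k - a = k by omega] at eA
  have eB := qbinom_mul_qfact n (a+k) h2
  have eC := qbinom_mul_qfact (n-a) k (by omega)
  have eD := qbinom_mul_qfact n a h
  rw [show n - (a+k) = n - a - k by omega] at eB
  calc qbinom n (a + k) * qbinom (a + k) a * (qfact a * qfact k * qfact (n - a - k))
      = qbinom n (a+k) * (qbinom (a+k) a * qfact a * qfact k) * qfact (n - a - k) := by ring
    _ = qbinom n (a+k) * qfact (a+k) * qfact (n - a - k) := by rw [eA]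
    _ = qfact n := eB
    _ = qbinom n a * qfact a * qfact (n - a) := eD.symm
    _ = qbinom n a * qfact a * (qbinom (n-a) k * qfact k * qfact (n - a - k)) := by rw [eC]
    _ = qbinom n a * qbinom (n - a) k * (qfact a * qfact k * qfact (n - a - k)) := by ring

open LaurentPolynomial

lemma qvandermonde (B A N : ℕ) :
    Polynomial.toLaurent (qbinom (A + B) N) =
      ∑ k ∈ Finset.range (N + 1),
        Polynomial.toLaurent (qbinom A k) * Polynomial.toLaurent (qbinom B (N - k)) *
          T ((k : ℤ) * ((B : ℤ) - (N : ℤ) + (k : ℤ))) := by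
  induction B generalizing N with
  | zero =>
    rw [Finset.sum_eq_single N]
    · rw [Nat.sub_self, qbinom_zero, Nat.add_zero]
      rw [show ((N : ℤ) * (((0:ℕ) : ℤ) - (N : ℤ) + (N : ℤ))) = 0 by push_cast; ring]
      simp
    · intro k hk hne
      rw [qbinom_eq_zero (show (0:ℕ) < N - k by simp at hk; omega)]
      simp
    · intro hN; exact absurd (Finset.self_mem_range_succ N) hN
  | succ B ih =>
    cases N with
    | zero =>
      rw [show (0:ℕ) + 1 = 1 from rfl, Finset.sum_range_one]
      simp [qbinom_zero]
    | succ M =>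
      rw [show A + (B+1) = (A+B)+1 by omega, qbinom_succ_succ, map_add, map_mul,
        Polynomial.toLaurent_X_pow, ih M, ih (M+1)]
      rw [Finset.sum_range_succ (n := M+1), Finset.sum_range_succ (n := M+1), mul_add]
      have h2 : Polynomial.toLaurent (qbinom A (M + 1)) *
            Polynomial.toLaurent (qbinom (B + 1) (M + 1 - (M + 1))) *
            T ((((M+1:ℕ)):ℤ) * ((((B+1:ℕ)):ℤ) - ((M+1:ℕ):ℤ) + ((M+1:ℕ):ℤ))) =
          T ((M+1:ℕ):ℤ) *
            (Polynomial.toLaurent (qbinom A (M + 1)) *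
              Polynomial.toLaurent (qbinom B (M + 1 - (M + 1))) *
              T ((((M+1:ℕ)):ℤ) * ((B:ℤ) - ((M+1:ℕ):ℤ) + ((M+1:ℕ):ℤ)))) := by
        rw [Nat.sub_self, qbinom_zero, qbinom_zero, Polynomial.toLaurent_one,
          show ((((M+1:ℕ)):ℤ) * ((((B+1:ℕ)):ℤ) - ((M+1:ℕ):ℤ) + ((M+1:ℕ):ℤ))) =
            ((M+1:ℕ):ℤ) + (((M+1:ℕ)):ℤ) * ((B:ℤ) - ((M+1:ℕ):ℤ) + ((M+1:ℕ):ℤ)) by push_cast; ring,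
          T_add]
        ring
      have h1 : ∀ x ∈ Finset.range (M+1),
          Polynomial.toLaurent (qbinom A x) * Polynomial.toLaurent (qbinom (B + 1) (M + 1 - x)) *
            T ((x:ℤ) * ((((B+1:ℕ)):ℤ) - ((M+1:ℕ):ℤ) + (x:ℤ))) =
          Polynomial.toLaurent (qbinom A x) * Polynomial.toLaurent (qbinom B (M - x)) *
            T ((x:ℤ) * ((B:ℤ) - (M:ℤ) + (x:ℤ))) +
          T ((M+1:ℕ):ℤ) *
            (Polynomial.toLaurent (qbinom A x) * Polynomial.toLaurent (qbinom B (M + 1 - x)) *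
              T ((x:ℤ) * ((B:ℤ) - ((M+1:ℕ):ℤ) + (x:ℤ)))) := by
        intro x hx
        rw [Finset.mem_range] at hx
        have hx' : x ≤ M := by omega
        rw [show M + 1 - x = (M - x) + 1 by omega, qbinom_succ_succ, map_add, map_mul,
          Polynomial.toLaurent_X_pow, show M - x + 1 = M + 1 - x by omega, mul_add, add_mul]
        congr 1
        · rw [show ((x:ℤ) * ((((B+1:ℕ)):ℤ) - ((M+1:ℕ):ℤ) + (x:ℤ))) =
              (x:ℤ) * ((B:ℤ) - (M:ℤ) + (x:ℤ)) by push_cast; ring]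
        · have key : (T ((M+1-x : ℕ) : ℤ) * T ((x:ℤ) * ((((B+1:ℕ)):ℤ) - ((M+1:ℕ):ℤ) + (x:ℤ))) : LaurentPolynomial ℤ) =
              T ((M+1:ℕ):ℤ) * T ((x:ℤ) * ((B:ℤ) - ((M+1:ℕ):ℤ) + (x:ℤ))) := by
            rw [← T_add, ← T_add]
            congr 1
            push_cast [Nat.cast_sub (show x ≤ M+1 by omega)]
            ring
          calc Polynomial.toLaurent (qbinom A x) *
                (T ((M+1-x : ℕ) : ℤ) * Polynomial.toLaurent (qbinom B (M + 1 - x))) *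
                T ((x:ℤ) * ((((B+1:ℕ)):ℤ) - ((M+1:ℕ):ℤ) + (x:ℤ)))
              = (T ((M+1-x : ℕ) : ℤ) * T ((x:ℤ) * ((((B+1:ℕ)):ℤ) - ((M+1:ℕ):ℤ) + (x:ℤ)))) *
                (Polynomial.toLaurent (qbinom A x) * Polynomial.toLaurent (qbinom B (M + 1 - x))) := by
                ring
            _ = (T ((M+1:ℕ):ℤ) * T ((x:ℤ) * ((B:ℤ) - ((M+1:ℕ):ℤ) + (x:ℤ)))) *
                (Polynomial.toLaurent (qbinom A x) * Polynomial.toLaurent (qbinom B (M + 1 - x))) := by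
                rw [key]
            _ = T ((M+1:ℕ):ℤ) *
                (Polynomial.toLaurent (qbinom A x) * Polynomial.toLaurent (qbinom B (M + 1 - x)) *
                  T ((x:ℤ) * ((B:ℤ) - ((M+1:ℕ):ℤ) + (x:ℤ)))) := by ring
      rw [Finset.sum_congr rfl h1, Finset.sum_add_distrib, ← Finset.mul_sum, h2]
      ring


open LaurentPolynomial in
/-- `[h choose a]_q [h choose b]_q
  = ∑_{k=0}^{b} [h choose a+k]_q [a+k choose b]_q [b choose k]_q q^{k(a-b+k)}`
in `ℤ[q,q^{-1}]`. -/
theorem stmt10 (h a b : ℕ) :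
    Polynomial.toLaurent (qbinom h a * qbinom h b) =
      ∑ k ∈ Finset.range (b + 1),
        Polynomial.toLaurent (qbinom h (a + k) * qbinom (a + k) b * qbinom b k) *
          T ((k : ℤ) * ((a : ℤ) - b + k)) := by
  rcases Nat.lt_or_ge h a with hha | hha
  · rw [qbinom_eq_zero hha, zero_mul, map_zero]
    symm
    apply Finset.sum_eq_zero
    intro k hk
    rw [qbinom_eq_zero (show h < a + k by omega), zero_mul, zero_mul, map_zero, zero_mul]
  · have key : ∀ k ∈ Finset.range (b+1),
        qbinom h (a + k) * qbinom (a + k) b * qbinom b k =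
        qbinom h a * (qbinom (h - a) k * qbinom a (b - k)) := by
      intro k hk
      rw [Finset.mem_range] at hk
      have e1 : qbinom (a + k) b * qbinom b k = qbinom (a + k) k * qbinom a (b - k) := by
        have := qbinom_trinom (a + k) k (b - k)
        rw [show k + (b - k) = b by omega, show a + k - k = a by omega] at this
        exact this
      have e2 : qbinom (a + k) k = qbinom (a + k) a := by
        rw [qbinom_symm (show a ≤ a + k by omega), show a + k - a = k by omega]
      have e3 : qbinom h (a + k) * qbinom (a + k) a = qbinom h a * qbinom (h - a) k :=
        qbinom_trinom h a k
      calc qbinom h (a + k) * qbinom (a + k) b * qbinom b k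
          = qbinom h (a + k) * (qbinom (a + k) b * qbinom b k) := by ring
        _ = qbinom h (a + k) * qbinom (a + k) a * qbinom a (b - k) := by rw [e1, e2]; ring
        _ = qbinom h a * (qbinom (h - a) k * qbinom a (b - k)) := by rw [e3]; ring
    rw [map_mul]
    have hv := qvandermonde a (h - a) b
    rw [show h - a + a = h by omega] at hv
    rw [hv, Finset.mul_sum]
    apply Finset.sum_congr rfl
    intro k hk
    rw [key k hk, map_mul, map_mul]
    ring
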